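/- If J is a non-singular matrix with K(β) J K(β)* = J for all β ∈ B_n, then the characteristic polynomial f_β(z,t,q) = det(zI − K(β)(t,q)) satisfies f_β(z^{−1}, t^{−1}, q^{−1}) = (−z)^{−n(n−1)/2} · det(K(β))^{−1} · f_β(z, t, q); in particular f_β(z^{−1}, t^{−1}, q^{−1}) equals f_β(z,t,q) up to multiplication by a unit in ℤ[z^{±1}, t^{±1}, q^{±1}]. -/

import Mathlib

open Matrix

noncomputable section

/-- Braid relations among the Artin generators `σ_1, …, σ_{n-1}`
(indexed here by `Fin (n-1)`, with `i : Fin (n-1)` standing for `σ_{i+1}`). -/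
def braidRels (n : ℕ) : Set (FreeGroup (Fin (n - 1))) :=
  {r | (∃ i j : Fin (n - 1), (i : ℕ) + 1 = (j : ℕ) ∧
          r = .of i * .of j * .of i * (.of j * .of i * .of j)⁻¹) ∨
       (∃ i j : Fin (n - 1), (i : ℕ) + 2 ≤ (j : ℕ) ∧
          r = .of i * .of j * (.of j * .of i)⁻¹)}

/-- The braid group `B_n` as a presented group. -/
abbrev Braid (n : ℕ) := PresentedGroup (braidRels n)

/-- The Artin generator `σ_{i+1}` of `B_n`. -/
def σg {n : ℕ} (i : Fin (n - 1)) : Braid n := PresentedGroup.of i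

/-- Index set `{(i,j) : 1 ≤ i < j ≤ n}` for the Lawrence–Krammer basis `X_{i,j}`. -/
abbrev BP (n : ℕ) := {p : Fin (n + 1) × Fin (n + 1) // 0 < (p.1 : ℕ) ∧ (p.1 : ℕ) < (p.2 : ℕ)}

/-- The standard basis row vector `X_{a,b}`. -/
def ee {R : Type*} [CommRing R] (n a b : ℕ) : BP n → R :=
  fun c => if (c.val.1 : ℕ) = a ∧ (c.val.2 : ℕ) = b then 1 else 0

/-- The Lawrence–Krammer matrix of the Artin generator `σ_m` (1-based `m`),
with parameters `t`, `q`; row `(i,j)` is the expansion of `X_{i,j}·σ_m` in the basis. -/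
def LKgen {R : Type*} [CommRing R] (t q : R) (n m : ℕ) : Matrix (BP n) (BP n) R :=
  fun r c =>
    let i := (r.val.1 : ℕ); let j := (r.val.2 : ℕ)
    if m = i ∧ j = i + 1 then -(t * q ^ 2) * ee n i j c
    else if m = i then
      q * ee n (i + 1) j c + (1 - q) * ee n i j c + t * q * (1 - q) * ee n i (i + 1) c
    else if m = j then
      q * ee n i (j + 1) c + (1 - q) * ee n i j c - q * (1 - q) * ee n j (j + 1) c
    else if m + 1 = i then ee n (i - 1) j c
    else if m + 1 = j then ee n i (j - 1) c
    else ee n i j c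

/-- The field `ℚ(t,q)` of rational functions in two variables. -/
abbrev F2 := FractionRing (MvPolynomial (Fin 2) ℚ)

/-- The variable `t` in `ℚ(t,q)`. -/
def tt : F2 := algebraMap (MvPolynomial (Fin 2) ℚ) F2 (MvPolynomial.X 0)

/-- The variable `q` in `ℚ(t,q)`. -/
def qq : F2 := algebraMap (MvPolynomial (Fin 2) ℚ) F2 (MvPolynomial.X 1)

/-- If `J` is non-singular and `K(β) J K(β)* = J` for all `β`, then the
characteristic polynomial `f_β(z,t,q) = det(zI − K(β))` satisfies
`f_β(z⁻¹, t⁻¹, q⁻¹) = (−z)^{−n(n−1)/2} · det(K(β))⁻¹ · f_β(z,t,q)`; in particular it equals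
`f_β(z,t,q)` up to multiplication by a unit. -/

lemma eval_charpoly_aux {ι R : Type*} [CommRing R] [Fintype ι] [DecidableEq ι]
    (M : Matrix ι ι R) (z : R) :
    M.charpoly.eval z = (z • (1 : Matrix ι ι R) - M).det := by
  rw [Matrix.charpoly, _root_.eval_det, Matrix.matPolyEquiv_charmatrix,
    Polynomial.eval_sub, Polynomial.eval_X, Polynomial.eval_C,
    Matrix.scalar_apply, Matrix.smul_one_eq_diagonal]

set_option maxHeartbeats 1000000 in
theorem lk_charpoly_symmetry (n : ℕ) (K : Braid n →* GL (BP n) F2)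
    (hK : ∀ m : Fin (n - 1),
      (K (σg m) : Matrix (BP n) (BP n) F2) = LKgen tt qq n ((m : ℕ) + 1))
    (conj : F2 →+* F2) (hct : conj tt = tt⁻¹) (hcq : conj qq = qq⁻¹)
    (J : Matrix (BP n) (BP n) F2) (hJ : J.det ≠ 0)
    (hU : ∀ β : Braid n,
      (K β : Matrix (BP n) (BP n) F2) * J * ((K β : Matrix (BP n) (BP n) F2).map conj)ᵀ = J)
    (β : Braid n) (z : F2) (hz : z ≠ 0) :
    Polynomial.eval z⁻¹ ((K β : Matrix (BP n) (BP n) F2).map conj).charpoly =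
      ((-z) ^ Fintype.card (BP n))⁻¹ * ((K β : Matrix (BP n) (BP n) F2).det)⁻¹ *
        Polynomial.eval z (K β : Matrix (BP n) (BP n) F2).charpoly := by
  classical
  set M : Matrix (BP n) (BP n) F2 := (K β : Matrix (BP n) (BP n) F2) with hMdef
  set A : Matrix (BP n) (BP n) F2 := M.map conj with hAdef
  set d := Fintype.card (BP n) with hd
  -- M is invertible
  have hMunit : IsUnit M := ⟨K β, rfl⟩
  have hMdet : IsUnit M.det := hMunit.map (Matrix.detMonoidHom)
  have hMdet' : M.det ≠ 0 := hMdet.ne_zero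
  have hMinv : M * M⁻¹ = 1 := Matrix.mul_nonsing_inv M hMdet
  have hMinv' : M⁻¹ * M = 1 := Matrix.nonsing_inv_mul M hMdet
  have hJinv : J⁻¹ * J = 1 := Matrix.nonsing_inv_mul J (Ne.isUnit hJ)
  have hJinv' : J * J⁻¹ = 1 := Matrix.mul_nonsing_inv J (Ne.isUnit hJ)
  -- From the invariance relation, Aᵀ = J⁻¹ * M⁻¹ * J
  have hAT : Aᵀ = J⁻¹ * M⁻¹ * J := by
    have h := hU β
    calc Aᵀ = (J⁻¹ * M⁻¹ * M * J) * Aᵀ := by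
          rw [Matrix.mul_assoc J⁻¹ M⁻¹ M, hMinv', Matrix.mul_one, hJinv, Matrix.one_mul]
      _ = J⁻¹ * M⁻¹ * (M * J * Aᵀ) := by
          simp only [Matrix.mul_assoc]
      _ = J⁻¹ * M⁻¹ * J := by rw [h]
  have hzneg : (-z : F2) ≠ 0 := neg_ne_zero.mpr hz
  -- key computation
  have key : Polynomial.eval z⁻¹ A.charpoly
      = M.det⁻¹ * (-z⁻¹) ^ d * Polynomial.eval z M.charpoly := by
    rw [eval_charpoly_aux, eval_charpoly_aux]
    have h1 : (z⁻¹ • (1 : Matrix (BP n) (BP n) F2) - A).det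
        = (z⁻¹ • (1 : Matrix (BP n) (BP n) F2) - Aᵀ).det := by
      rw [← Matrix.det_transpose (z⁻¹ • 1 - A), Matrix.transpose_sub,
        Matrix.transpose_smul, Matrix.transpose_one]
    rw [h1, hAT]
    have hc : J⁻¹ * (z⁻¹ • (1 : Matrix (BP n) (BP n) F2)) * J
        = z⁻¹ • (1 : Matrix (BP n) (BP n) F2) := by
      rw [Matrix.mul_smul, Matrix.mul_one, Matrix.smul_mul, hJinv]
    have h2 : z⁻¹ • (1 : Matrix (BP n) (BP n) F2) - J⁻¹ * M⁻¹ * J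
        = J⁻¹ * (z⁻¹ • (1 : Matrix (BP n) (BP n) F2) - M⁻¹) * J := by
      rw [Matrix.mul_sub, Matrix.sub_mul, hc]
    rw [h2, Matrix.det_mul, Matrix.det_mul]
    have hJd : J⁻¹.det * J.det = 1 := by
      rw [← Matrix.det_mul, hJinv, Matrix.det_one]
    have h3 : J⁻¹.det * ((z⁻¹ • (1 : Matrix (BP n) (BP n) F2) - M⁻¹).det) * J.det
        = (z⁻¹ • (1 : Matrix (BP n) (BP n) F2) - M⁻¹).det := by
      calc J⁻¹.det * ((z⁻¹ • (1 : Matrix (BP n) (BP n) F2) - M⁻¹).det) * J.det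
          = (J⁻¹.det * J.det) * (z⁻¹ • (1 : Matrix (BP n) (BP n) F2) - M⁻¹).det := by
            ring
        _ = (z⁻¹ • (1 : Matrix (BP n) (BP n) F2) - M⁻¹).det := by rw [hJd, one_mul]
    rw [h3]
    have h4 : z⁻¹ • (1 : Matrix (BP n) (BP n) F2) - M⁻¹
        = M⁻¹ * ((-z⁻¹) • (z • (1 : Matrix (BP n) (BP n) F2) - M)) := by
      have e1 : M⁻¹ * ((-z⁻¹) • (z • (1 : Matrix (BP n) (BP n) F2) - M))
          = (-z⁻¹) • (z • M⁻¹ - 1) := by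
        rw [Matrix.mul_smul, Matrix.mul_sub, Matrix.mul_smul, Matrix.mul_one, hMinv']
      rw [e1, smul_sub, smul_smul, neg_mul, inv_mul_cancel₀ hz, neg_smul, one_smul,
        neg_smul z⁻¹, sub_neg_eq_add]
      abel
    rw [h4, Matrix.det_mul, Matrix.det_smul, Matrix.det_nonsing_inv,
      Ring.inverse_eq_inv']
    ring
  rw [key]
  have h5 : ((-z) ^ d)⁻¹ = (-z⁻¹) ^ d := by
    rw [← inv_pow, ← neg_inv]
  rw [h5]
  ring
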